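/- arXiv:1611.01619 — 2 statements merged into one kernel-verified Lean document; each statement's English description precedes it below -/
import Mathlib

section
/- For all positive reals x, y, A: (A/(xy) + 1)·ln(1 + xy/A) ≥ 1 + (xy/(2(xy+A)))·(1 + (2/3)·ln(1 + xy/A)). -/
open Real Set

lemma key_deriv (u : ℝ) (hu : 0 ≤ u) :
    HasDerivAt (fun v : ℝ => Real.log (1 + v) - (3*v^2 + 6*v)/(v^2 + 6*v + 6))
      (u^4 / ((1+u) * (u^2+6*u+6)^2)) u := by
  have h1 : (0:ℝ) < 1 + u := by linarith
  have hden : (0:ℝ) < u^2 + 6*u + 6 := by nlinarith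
  have hlog : HasDerivAt (fun v : ℝ => Real.log (1 + v)) (1/(1+u)) u := by
    have := ((hasDerivAt_id u).const_add 1).log (by positivity)
    simpa using this
  have hnum : HasDerivAt (fun v : ℝ => 3*v^2 + 6*v) (6*u + 6) u := by
    have h := ((hasDerivAt_pow 2 u).const_mul 3).add ((hasDerivAt_id u).const_mul 6)
    norm_num at h
    convert h using 1
    iterate 3 rfl
    ring
  have hd : HasDerivAt (fun v : ℝ => v^2 + 6*v + 6) (2*u + 6) u := by
    have h := ((hasDerivAt_pow 2 u).add ((hasDerivAt_id u).const_mul 6)).add_const 6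
    simp only [id] at h
    convert h using 1
    iterate 3 rfl
    norm_num
  have hq := hnum.div hd (by positivity)
  have := hlog.sub hq
  convert this using 1
  iterate 3 rfl
  field_simp
  ring

lemma key (t : ℝ) (ht : 0 ≤ t) :
    (3*t^2 + 6*t)/(t^2 + 6*t + 6) ≤ Real.log (1 + t) := by
  set f := fun v : ℝ => Real.log (1 + v) - (3*v^2 + 6*v)/(v^2 + 6*v + 6) with hf
  have hmono : MonotoneOn f (Ici (0:ℝ)) := by
    apply monotoneOn_of_deriv_nonneg (convex_Ici 0)
    · apply ContinuousOn.sub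
      · apply ContinuousOn.log (by fun_prop)
        intro v hv; simp only [mem_Ici, mem_Ioi] at hv; positivity
      · apply ContinuousOn.div (by fun_prop) (by fun_prop)
        intro v hv; simp only [mem_Ici, mem_Ioi] at hv; positivity
    · intro v hv
      rw [interior_Ici] at hv
      exact (key_deriv v (le_of_lt hv)).differentiableAt.differentiableWithinAt
    · intro v hv
      rw [interior_Ici] at hv
      simp only [mem_Ioi] at hv
      rw [(key_deriv v hv.le).deriv]
      have h1 : (0:ℝ) < 1 + v := by linarith
      have hden : (0:ℝ) < v^2 + 6*v + 6 := by nlinarith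
      positivity
  have h0 : f 0 ≤ f t := hmono (self_mem_Ici) ht ht
  simp only [hf] at h0
  norm_num at h0
  linarith

theorem stmt_2 (x y A : ℝ) (hx : 0 < x) (hy : 0 < y) (hA : 0 < A) :
    (A / (x * y) + 1) * Real.log (1 + x * y / A) ≥
      1 + x * y / (2 * (x * y + A)) * (1 + 2 / 3 * Real.log (1 + x * y / A)) := by
  set t := x * y / A with htdef
  have ht : 0 < t := by positivity
  have hL := key t ht.le
  set L := Real.log (1 + t) with hLdef
  have hden : (0:ℝ) < t^2 + 6*t + 6 := by nlinarith
  have hkey : L * (1 + 2*t + 2/3*t^2) ≥ t + 3/2*t^2 := by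
    have h1 : (3*t^2 + 6*t) ≤ L * (t^2 + 6*t + 6) := by
      rw [div_le_iff₀ hden] at hL; linarith
    nlinarith [mul_le_mul_of_nonneg_left h1 (by nlinarith : (0:ℝ) ≤ 1 + 2*t + 2/3*t^2),
      pow_pos ht 4, sq_nonneg t]
  have hxy : x * y = A * t := by rw [htdef]; field_simp
  rw [hxy]
  have h1t : (0:ℝ) < 1 + t := by linarith
  rw [ge_iff_le, ← sub_nonneg]
  have hAne : A ≠ 0 := hA.ne'
  have e1 : A / (A * t) = 1 / t := by field_simp
  have e2 : A * t / (2 * (A * t + A)) = t / (2 * (1 + t)) := by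
    rw [show A * t + A = A * (1 + t) by ring]
    field_simp
  rw [e1, e2]
  have expand : (1 / t + 1) * L - (1 + t / (2 * (1 + t)) * (1 + 2 / 3 * L))
      = (L * (1 + 2*t + 2/3*t^2) - (t + 3/2*t^2)) / (t * (1 + t)) := by
    field_simp
    ring
  rw [expand]
  apply div_nonneg (by linarith) (by positivity)
end

section
/- Let (M_t)_{t∈[s,T]} be a continuous square-integrable martingale on a probability space with conditional variance bound E[(M_t - M_u)^2 | F_u] ≤ σ^2 (t - u) a.s. for all s ≤ u ≤ t ≤ T. Then for every x ≥ 0 and s ≤ t ≤ T, P(M_t - M_s ≥ x) ≤ exp(-x^2/(2σ^2(t-s))). -/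
open MeasureTheory Real

lemma exp_quad_neg {z : ℝ} (hz : z ≤ 0) : Real.exp z ≤ 1 + z + z^2/2 := by
  have hmono : AntitoneOn (fun z : ℝ => (1 + z + z^2/2) - Real.exp z) (Set.Iic 0) := by
    have hderiv : ∀ x : ℝ, HasDerivAt (fun z : ℝ => (1 + z + z^2/2) - Real.exp z)
        ((1 + x) - Real.exp x) x := by
      intro x
      have h1 : HasDerivAt (fun z : ℝ => Real.exp z) (Real.exp x) x := Real.hasDerivAt_exp x
      have h2 : HasDerivAt (fun z : ℝ => 1 + z + z^2/2) (1 + x) x := by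
        have : HasDerivAt (fun z : ℝ => 1 + z + z^2/2) (0 + 1 + (2 * x^1 * 1)/2) x := by
          exact ((hasDerivAt_const x (1:ℝ)).add (hasDerivAt_id x)).add
            (((hasDerivAt_pow 2 x).comp_of_eq x (hasDerivAt_id x) rfl).div_const 2)
        convert this using 1; ring
      exact h2.sub h1
    apply antitoneOn_of_deriv_nonpos (convex_Iic (0:ℝ))
    · exact ((by continuity : Continuous fun z : ℝ => 1 + z + z^2/2).sub
        Real.continuous_exp).continuousOn
    · intro x _
      exact (hderiv x).differentiableAt.differentiableWithinAt
    · intro x _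
      rw [(hderiv x).deriv]
      linarith [Real.add_one_le_exp x]
  have h := hmono (Set.mem_Iic.2 hz) (Set.mem_Iic.2 le_rfl) hz
  simp only [Real.exp_zero] at h
  nlinarith [h]

lemma exp_quad_pos {z : ℝ} (hz : 0 ≤ z) : Real.exp z ≤ 1 + z + z^2/2 * Real.exp z := by
  have hmono : MonotoneOn (fun z : ℝ => 1 + z + z^2/2 * Real.exp z - Real.exp z) (Set.Ici 0) := by
    have hderiv : ∀ x : ℝ, HasDerivAt (fun z : ℝ => 1 + z + z^2/2 * Real.exp z - Real.exp z)
        (1 + (x * Real.exp x + x^2/2 * Real.exp x) - Real.exp x) x := by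
      intro x
      have h1 : HasDerivAt (fun z : ℝ => z^2/2 * Real.exp z)
          (x * Real.exp x + x^2/2 * Real.exp x) x := by
        have : HasDerivAt (fun z : ℝ => z^2/2 * Real.exp z)
            ((2 * x^1 * 1)/2 * Real.exp x + x^2/2 * Real.exp x) x := by
          exact (((hasDerivAt_pow 2 x).comp_of_eq x (hasDerivAt_id x) rfl).div_const 2).mul
            (Real.hasDerivAt_exp x)
        convert this using 1; ring
      have h2 : HasDerivAt (fun z : ℝ => 1 + z) (0 + 1) x :=
        (hasDerivAt_const x (1:ℝ)).add (hasDerivAt_id x)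
      have : HasDerivAt (fun z : ℝ => 1 + z + z^2/2 * Real.exp z - Real.exp z)
          (0 + 1 + (x * Real.exp x + x^2/2 * Real.exp x) - Real.exp x) x :=
        (h2.add h1).sub (Real.hasDerivAt_exp x)
      convert this using 1
      ring
    apply monotoneOn_of_deriv_nonneg (convex_Ici (0:ℝ))
    · exact ((by continuity : Continuous fun z : ℝ => 1 + z + z^2/2 * Real.exp z).sub
        Real.continuous_exp).continuousOn
    · intro x _
      exact (hderiv x).differentiableAt.differentiableWithinAt
    · intro x hx
      rw [(hderiv x).deriv]
      rw [interior_Ici] at hx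
      have hx' : (0:ℝ) < x := hx
      -- need : 1 + x e^x + x²/2 e^x - e^x ≥ 0, i.e. e^x - 1 ≤ (x + x²/2) e^x
      have h3 : 1 - x ≤ Real.exp (-x) := by linarith [Real.add_one_le_exp (-x)]
      have h4 : Real.exp x - x * Real.exp x ≤ 1 := by
        have := mul_le_mul_of_nonneg_left h3 (Real.exp_pos x).le
        rw [← Real.exp_add] at this
        simp at this
        nlinarith [this]
      nlinarith [Real.exp_pos x, sq_nonneg x]
  have h := hmono (Set.mem_Ici.2 le_rfl) (Set.mem_Ici.2 hz) hz
  simp only [Real.exp_zero] at h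
  nlinarith [h]

lemma exp_quad {c y : ℝ} (hc : 0 ≤ c) (hy : y ≤ c) :
    Real.exp y ≤ 1 + y + y^2/2 * Real.exp c := by
  rcases le_or_gt y 0 with h | h
  · have := exp_quad_neg h
    have h1 : (1:ℝ) ≤ Real.exp c := Real.one_le_exp hc
    nlinarith [sq_nonneg y]
  · have := exp_quad_pos h.le
    have h1 : Real.exp y ≤ Real.exp c := Real.exp_le_exp.2 hy
    nlinarith [sq_nonneg y, Real.exp_pos y]

lemma step_bound {Ω : Type*} {m0 : MeasurableSpace Ω} {μ : Measure Ω} [IsProbabilityMeasure μ]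
    {G : MeasurableSpace Ω} (hG : G ≤ m0) (D : Ω → ℝ) (l cb v : ℝ) (hl : 0 ≤ l) (hcb : 0 ≤ cb)
    (hmeas : StronglyMeasurable[m0] D)
    (hint : Integrable D μ) (hint2 : Integrable (fun ω => D ω ^ 2) μ)
    (hbd : ∀ᵐ ω ∂μ, D ω ≤ cb)
    (h0 : μ[D | G] =ᵐ[μ] 0)
    (h2 : μ[fun ω => D ω ^ 2 | G] ≤ᵐ[μ] fun _ => v) :
    μ[fun ω => Real.exp (l * D ω) | G] ≤ᵐ[μ] fun _ => 1 + l^2 * Real.exp (l * cb) * v / 2 := by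
  set κ : ℝ := l^2 * Real.exp (l * cb) / 2 with hκ
  have hκ0 : 0 ≤ κ := by positivity
  have hasm : AEStronglyMeasurable[m0] (fun ω => Real.exp (l * D ω)) μ :=
    (Real.continuous_exp.comp_stronglyMeasurable (hmeas.const_mul l)).aestronglyMeasurable
  have hexp_int : Integrable (fun ω => Real.exp (l * D ω)) μ := by
    refine Integrable.mono' (integrable_const (Real.exp (l * cb))) hasm ?_
    filter_upwards [hbd] with ω hω
    rw [Real.norm_eq_abs, abs_of_pos (Real.exp_pos _)]
    exact Real.exp_le_exp.2 (mul_le_mul_of_nonneg_left hω hl)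
  have hg_int : Integrable ((fun _ => (1:ℝ)) + (l • D + κ • fun ω => D ω ^ 2)) μ :=
    (integrable_const 1).add ((hint.smul l).add (hint2.smul κ))
  have hptwise : (fun ω => Real.exp (l * D ω)) ≤ᵐ[μ]
      (fun _ => (1:ℝ)) + (l • D + κ • fun ω => D ω ^ 2) := by
    filter_upwards [hbd] with ω hω
    have h := exp_quad (c := l * cb) (y := l * D ω) (by positivity)
      (mul_le_mul_of_nonneg_left hω hl)
    simp only [Pi.add_apply, Pi.smul_apply, smul_eq_mul]
    nlinarith [h]
  have hmono := condExp_mono (m := G) hexp_int hg_int hptwise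
  have heq : μ[(fun _ => (1:ℝ)) + (l • D + κ • fun ω => D ω ^ 2) | G] ≤ᵐ[μ]
      fun _ => 1 + l^2 * Real.exp (l * cb) * v / 2 := by
    have e1 := condExp_add (μ := μ) (m := G) (integrable_const (1:ℝ))
      ((hint.smul l).add (hint2.smul κ))
    have e2 := condExp_add (μ := μ) (m := G) (hint.smul l) (hint2.smul κ)
    have e3 := condExp_smul (μ := μ) (m := G) l D
    have e4 := condExp_smul (μ := μ) (m := G) κ (fun ω => D ω ^ 2)
    have e5 : ∀ ω, (μ[(fun _ => (1:ℝ))|G]) ω = 1 := fun ω => by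
      rw [condExp_const (μ := μ) hG (1:ℝ)]
    filter_upwards [e1, e2, e3, e4, h0, h2] with ω h1 h2' h3 h4 h6 h7
    have h7' : κ * (μ[fun ω => D ω ^ 2|G]) ω ≤ κ * v := mul_le_mul_of_nonneg_left h7 hκ0
    simp only [Pi.add_apply, Pi.smul_apply, smul_eq_mul] at h1 h2' h3 h4 h7' ⊢
    rw [h1, h2', h3, h4, e5, h6]
    simp only [mul_zero, add_zero, zero_add, smul_eq_mul, Pi.zero_apply]
    have hkv : κ * v = l^2 * Real.exp (l * cb) * v / 2 := by rw [hκ]; ring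
    linarith
  exact hmono.trans heq

lemma mgf_bound {Ω : Type*} {m0 : MeasurableSpace Ω} {μ : Measure Ω} [IsProbabilityMeasure μ]
    (𝒢 : ℕ → MeasurableSpace Ω) (hle : ∀ i, 𝒢 i ≤ m0) (hmono : Monotone 𝒢)
    (D : ℕ → Ω → ℝ) (l cb v : ℝ) (hl : 0 ≤ l) (hcb : 0 ≤ cb) (hv : 0 ≤ v)
    (hmeas : ∀ i, StronglyMeasurable[𝒢 (i+1)] (D i))
    (hint : ∀ i, Integrable (D i) μ) (hint2 : ∀ i, Integrable (fun ω => D i ω ^ 2) μ)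
    (hbd : ∀ i, ∀ᵐ ω ∂μ, D i ω ≤ cb)
    (h0 : ∀ i, μ[D i | 𝒢 i] =ᵐ[μ] 0)
    (h2 : ∀ i, μ[fun ω => D i ω ^ 2 | 𝒢 i] ≤ᵐ[μ] fun _ => v) :
    ∀ n, ∫ ω, Real.exp (l * ∑ i ∈ Finset.range n, D i ω) ∂μ
      ≤ (1 + l^2 * Real.exp (l * cb) * v / 2)^n := by
  have hmeas' : ∀ i, StronglyMeasurable[m0] (D i) := fun i => (hmeas i).mono (hle (i+1))
  -- basic: partial sums measurable wrt 𝒢 n and bounded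
  have hSmeas : ∀ n, StronglyMeasurable[𝒢 n] (fun ω => ∑ i ∈ Finset.range n, D i ω) := by
    intro n
    apply Finset.stronglyMeasurable_fun_sum
    intro i hi
    exact (hmeas i).mono (hmono (Finset.mem_range.1 hi))
  have hSbd : ∀ n, ∀ᵐ ω ∂μ, ∑ i ∈ Finset.range n, D i ω ≤ n * cb := by
    intro n
    have h := (ae_ball_iff (Finset.range n).countable_toSet).2 fun i _ => hbd i
    filter_upwards [h] with ω hω
    calc ∑ i ∈ Finset.range n, D i ω ≤ ∑ _i ∈ Finset.range n, cb :=
          Finset.sum_le_sum fun i hi => hω i hi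
      _ = n * cb := by simp [mul_comm]
  have hexpS_int : ∀ n, Integrable (fun ω => Real.exp (l * ∑ i ∈ Finset.range n, D i ω)) μ := by
    intro n
    refine Integrable.mono' (integrable_const (Real.exp (l * (n * cb))))
      (Real.continuous_exp.comp_stronglyMeasurable
        (((hSmeas n).mono (hle n)).const_mul l)).aestronglyMeasurable ?_
    filter_upwards [hSbd n] with ω hω
    rw [Real.norm_eq_abs, abs_of_pos (Real.exp_pos _)]
    exact Real.exp_le_exp.2 (mul_le_mul_of_nonneg_left hω hl)
  set B : ℝ := 1 + l^2 * Real.exp (l * cb) * v / 2 with hB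
  have hB1 : 1 ≤ B := by
    rw [hB]
    have : 0 ≤ l^2 * Real.exp (l * cb) * v / 2 := by positivity
    linarith
  have hB0 : 0 ≤ B := by linarith
  intro n
  induction n with
  | zero => simp
  | succ n ih =>
    have hexpD_int : Integrable (fun ω => Real.exp (l * D n ω)) μ := by
      refine Integrable.mono' (integrable_const (Real.exp (l * cb)))
        (Real.continuous_exp.comp_stronglyMeasurable
          ((hmeas' n).const_mul l)).aestronglyMeasurable ?_
      filter_upwards [hbd n] with ω hω
      rw [Real.norm_eq_abs, abs_of_pos (Real.exp_pos _)]
      exact Real.exp_le_exp.2 (mul_le_mul_of_nonneg_left hω hl)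
    have hsplit : (fun ω => Real.exp (l * ∑ i ∈ Finset.range (n+1), D i ω))
        = fun ω => Real.exp (l * ∑ i ∈ Finset.range n, D i ω) * Real.exp (l * D n ω) := by
      funext ω
      rw [Finset.sum_range_succ, mul_add, Real.exp_add]
    set F : Ω → ℝ := fun ω => Real.exp (l * ∑ i ∈ Finset.range n, D i ω) with hF
    have hFmeas : StronglyMeasurable[𝒢 n] F :=
      Real.continuous_exp.comp_stronglyMeasurable ((hSmeas n).const_mul l)
    have hFbd : ∀ᵐ ω ∂μ, ‖F ω‖ ≤ Real.exp (l * (n * cb)) := by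
      filter_upwards [hSbd n] with ω hω
      rw [Real.norm_eq_abs, abs_of_pos (Real.exp_pos _)]
      exact Real.exp_le_exp.2 (mul_le_mul_of_nonneg_left hω hl)
    have hpull := condExp_stronglyMeasurable_mul_of_bound (hle n) hFmeas hexpD_int
      (Real.exp (l * (n * cb))) hFbd
    have hstep := step_bound (hle n) (D n) l cb v hl hcb (hmeas' n) (hint n) (hint2 n)
      (hbd n) (h0 n) (h2 n)
    have hFint : Integrable F μ := hexpS_int n
    calc ∫ ω, Real.exp (l * ∑ i ∈ Finset.range (n+1), D i ω) ∂μ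
        = ∫ ω, (μ[F * fun ω' => Real.exp (l * D n ω') | 𝒢 n]) ω ∂μ := by
          rw [integral_condExp (hle n)]
          rw [hsplit]
          rfl
      _ = ∫ ω, F ω * (μ[fun ω' => Real.exp (l * D n ω') | 𝒢 n]) ω ∂μ := by
          refine integral_congr_ae ?_
          filter_upwards [hpull] with ω hω
          simpa using hω
      _ ≤ ∫ ω, F ω * B ∂μ := by
          refine integral_mono_ae ?_ (hFint.mul_const B) ?_
          · refine (integrable_condExp
                (f := F * fun ω' => Real.exp (l * D n ω')) (m := 𝒢 n)).congr ?_
            filter_upwards [hpull] with ω hω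
            simpa using hω
          · filter_upwards [hstep] with ω hω
            exact mul_le_mul_of_nonneg_left hω (le_of_lt (Real.exp_pos _))
      _ = (∫ ω, F ω ∂μ) * B := integral_mul_const B F
      _ ≤ B^n * B := mul_le_mul_of_nonneg_right ih hB0
      _ = B^(n+1) := by ring

set_option maxHeartbeats 1000000 in
theorem stmt_10 {Ω : Type*} {m : MeasurableSpace Ω} {μ : Measure Ω} [IsProbabilityMeasure μ]
    (ℱ : Filtration ℝ m) (M : ℝ → Ω → ℝ) (s T σ : ℝ) (hsT : s ≤ T) (hσ : 0 < σ)
    (hM : Martingale M ℱ μ)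
    (hsq : ∀ t, Integrable (fun ω => (M t ω) ^ 2) μ)
    (hcont : ∀ ω, ContinuousOn (fun t => M t ω) (Set.Icc s T))
    (hvar : ∀ u t : ℝ, s ≤ u → u ≤ t → t ≤ T →
      ∀ᵐ ω ∂μ, (μ[fun ω' => (M t ω' - M u ω') ^ 2 | ℱ u]) ω ≤ σ ^ 2 * (t - u))
    (x : ℝ) (hx : 0 ≤ x) (t : ℝ) (hst : s ≤ t) (htT : t ≤ T) :
    (μ {ω | x ≤ M t ω - M s ω}).toReal ≤ Real.exp (-(x ^ 2) / (2 * σ ^ 2 * (t - s))) := by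
  classical
  have htriv : (μ {ω | x ≤ M t ω - M s ω}).toReal ≤ 1 := by
    calc (μ {ω | x ≤ M t ω - M s ω}).toReal
        ≤ (μ Set.univ).toReal :=
          ENNReal.toReal_mono (measure_ne_top μ _) (measure_mono (Set.subset_univ _))
      _ = 1 := by simp
  by_cases hmain : 0 < x ∧ s < t
  swap
  · have hRHS : Real.exp (-(x ^ 2) / (2 * σ ^ 2 * (t - s))) = 1 := by
      push_neg at hmain
      rcases eq_or_lt_of_le hx with hx0 | hx0
      · rw [← hx0]; norm_num
      · have := hmain hx0
        have hts : t - s = 0 := by linarith [lt_of_le_of_ne hst]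
        rw [hts]
        norm_num
    rw [hRHS]; exact htriv
  obtain ⟨hx0, hst'⟩ := hmain
  have htspos : 0 < t - s := sub_pos.2 hst'
  set V : ℝ := σ ^ 2 * (t - s) with hV
  have hVpos : 0 < V := mul_pos (pow_pos hσ 2) htspos
  set l : ℝ := x / V with hl
  have hlpos : 0 < l := div_pos hx0 hVpos
  -- target as value of g at 0
  set g : ℝ → ℝ := fun c => Real.exp (-(l * x) + l ^ 2 * Real.exp (l * c) * V / 2) with hg
  have hg0 : g 0 = Real.exp (-(x ^ 2) / (2 * σ ^ 2 * (t - s))) := by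
    rw [hg]
    simp only [mul_zero, Real.exp_zero, mul_one]
    congr 1
    rw [hl, hV]
    have h2 : (2 : ℝ) * σ ^ 2 * (t - s) = 2 * (σ ^ 2 * (t - s)) := by ring
    rw [h2]
    field_simp
    ring
  rw [← hg0]
  refine le_of_forall_sub_le ?_
  intro δ hδ
  rw [sub_le_iff_le_add]
  -- continuity of g at 0 : choose c₀
  have hgc : ContinuousAt g 0 := by
    apply Continuous.continuousAt
    rw [hg]; continuity
  obtain ⟨c₀, hc₀pos, hc₀⟩ : ∃ c₀ > 0, ∀ c, 0 ≤ c → c < c₀ → g c ≤ g 0 + δ / 2 := by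
    rcases Metric.continuousAt_iff.1 hgc (δ / 2) (by linarith) with ⟨r, hr, hball⟩
    refine ⟨r, hr, fun c hc0 hcr => ?_⟩
    have := hball (x := c) (by rwa [Real.dist_eq, sub_zero, abs_of_nonneg hc0])
    rw [Real.dist_eq] at this
    have := abs_lt.1 this
    linarith [this.1, this.2]
  set ε : ℝ := c₀ / 2 with hε
  have hεpos : 0 < ε := by rw [hε]; linarith
  -- partitions
  set ptt : ℕ → ℕ → ℝ := fun n i => s + (min i n : ℕ) * ((t - s) / n) with hptt
  set Bad : ℕ → Set Ω := fun n =>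
    {ω | ∃ i < n, ε < M (ptt n (i + 1)) ω - M (ptt n i) ω} with hBad
  have hMmeas : ∀ u : ℝ, Measurable (M u) := fun u =>
    ((hM.stronglyMeasurable u).measurable).mono (ℱ.le u) le_rfl
  have hBadMeas : ∀ n, MeasurableSet (Bad n) := by
    intro n
    have heq : Bad n = ⋃ i ∈ Set.Iio n, {ω | ε < M (ptt n (i + 1)) ω - M (ptt n i) ω} := by
      ext ω; simp [hBad]
    rw [heq]
    exact MeasurableSet.biUnion (Set.to_countable _)
      fun i _ => measurableSet_lt measurable_const ((hMmeas _).sub (hMmeas _))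
  -- partition points basic facts
  have hptt_mem : ∀ n i, ptt n i ∈ Set.Icc s t := by
    intro n i
    rw [hptt]
    constructor
    · have : (0:ℝ) ≤ (min i n : ℕ) * ((t - s) / n) := by positivity
      simp only; linarith
    · simp only
      rcases Nat.eq_zero_or_pos n with h0 | hn
      · subst h0; simp; linarith
      · have h1 : ((min i n : ℕ) : ℝ) ≤ (n : ℕ) := by
          exact_mod_cast Nat.cast_le.2 (min_le_right i n)
        have h2 : ((min i n : ℕ) : ℝ) * ((t - s) / n) ≤ n * ((t - s) / n) := by
          apply mul_le_mul_of_nonneg_right h1 (by positivity)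
        have h3 : (n : ℝ) * ((t - s) / n) = t - s := by
          field_simp
        linarith
  have hptt_mono : ∀ n, Monotone (ptt n) := by
    intro n i j hij
    rw [hptt]
    simp only
    have : ((min i n : ℕ) : ℝ) ≤ ((min j n : ℕ) : ℝ) := by
      exact_mod_cast Nat.cast_le.2 (min_le_min hij le_rfl)
    have h2 : (0:ℝ) ≤ (t - s) / n := by positivity
    nlinarith
  have hptt_diff : ∀ n i, ptt n (i + 1) - ptt n i ≤ (t - s) / n := by
    intro n i
    rw [hptt]
    simp only [add_sub_add_left_eq_sub]
    have h1 : ((min (i+1) n : ℕ) : ℝ) - ((min i n : ℕ) : ℝ) ≤ 1 := by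
      have h : min (i+1) n ≤ min i n + 1 := by omega
      have h' := (Nat.cast_le (α := ℝ)).2 h
      rw [Nat.cast_add, Nat.cast_one] at h'
      linarith
    have h2 : (0:ℝ) ≤ (t - s) / n := by positivity
    nlinarith [mul_le_mul_of_nonneg_right h1 h2]
  -- Bad n tends to zero
  have hBadT : Filter.Tendsto (fun n => μ (Bad n)) Filter.atTop (nhds 0) := by
    set U : ℕ → Set Ω := fun N => ⋃ n, ⋃ (_ : N ≤ n), Bad n with hU
    have hUmeas : ∀ N, MeasurableSet (U N) := fun N =>
      MeasurableSet.iUnion fun n => MeasurableSet.iUnion fun _ => hBadMeas n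
    have hUanti : Antitone U := by
      intro N N' hNN' ω hω
      simp only [hU, Set.mem_iUnion] at *
      obtain ⟨n, hn, h⟩ := hω
      exact ⟨n, le_trans hNN' hn, h⟩
    have hUempty : ⋂ N, U N = ∅ := by
      ext ω
      simp only [Set.mem_iInter, Set.mem_empty_iff_false, iff_false, not_forall]
      have hcω : ContinuousOn (fun u => M u ω) (Set.Icc s t) :=
        (hcont ω).mono (Set.Icc_subset_Icc le_rfl htT)
      have hc : UniformContinuousOn (fun u => M u ω) (Set.Icc s t) :=
        isCompact_Icc.uniformContinuousOn_of_continuous hcω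
      rcases Metric.uniformContinuousOn_iff.1 hc ε hεpos with ⟨δ₀, hδ₀, hδ₀'⟩
      obtain ⟨N, hN⟩ := exists_nat_gt ((t - s) / δ₀)
      refine ⟨N + 1, ?_⟩
      intro hmem
      rw [hU] at hmem
      simp only [Set.mem_iUnion] at hmem
      obtain ⟨n, hn, hbad⟩ := hmem
      rw [hBad] at hbad
      obtain ⟨i, hi, hgt⟩ := hbad
      have hn0 : 0 < n := by omega
      have hn0' : (0:ℝ) < n := by exact_mod_cast hn0
      have hmesh : (t - s) / n < δ₀ := by
        have hNn : ((N:ℝ) + 1) ≤ n := by exact_mod_cast hn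
        have h2 : (t - s) / δ₀ < n := lt_of_lt_of_le hN (by linarith)
        rw [div_lt_iff₀ hδ₀] at h2
        rw [div_lt_iff₀ hn0']
        linarith
      have hdist : dist (ptt n (i + 1)) (ptt n i) < δ₀ := by
        rw [Real.dist_eq, abs_of_nonneg (sub_nonneg.2 (hptt_mono n (Nat.le_succ i)))]
        exact lt_of_le_of_lt (hptt_diff n i) hmesh
      have h3 := hδ₀' _ (hptt_mem n (i + 1)) _ (hptt_mem n i) hdist
      rw [Real.dist_eq] at h3
      have h4 := abs_lt.1 h3
      linarith [h4.2]
    have hμU := tendsto_measure_iInter_atTop (μ := μ)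
      (fun N => (hUmeas N).nullMeasurableSet) hUanti ⟨0, measure_ne_top μ _⟩
    rw [hUempty] at hμU
    simp only [measure_empty] at hμU
    have hsub : ∀ n, Bad n ⊆ U n := by
      intro n ω hω
      simp only [hU, Set.mem_iUnion]
      exact ⟨n, le_rfl, hω⟩
    exact tendsto_of_tendsto_of_tendsto_of_le_of_le tendsto_const_nhds hμU
      (fun n => zero_le) (fun n => measure_mono (hsub n))
  -- choose n
  have hev1 : ∀ᶠ n : ℕ in Filter.atTop, μ (Bad n) < ENNReal.ofReal (δ / 2) := by
    refine Filter.Tendsto.eventually_lt_const ?_ hBadT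
    simp [ENNReal.ofReal_pos]; linarith
  have hev2 : ∀ᶠ n : ℕ in Filter.atTop, V / (n * ε) < ε := by
    have h := Filter.Tendsto.eventually_lt_const hεpos
      (tendsto_const_div_atTop_nhds_zero_nat (V / ε))
    filter_upwards [h] with n hn
    rwa [div_div, mul_comm ε _] at hn
  have hev3 : ∀ᶠ n : ℕ in Filter.atTop, 1 ≤ n := Filter.eventually_ge_atTop 1
  obtain ⟨n, hnBad, hncb, hn1⟩ := (hev1.and (hev2.and hev3)).exists
  -- partition setup for this n
  set tt : ℕ → ℝ := ptt n with htt
  have hn0' : (0:ℝ) < n := by exact_mod_cast hn1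
  set Δt : ℝ := (t - s) / n with hΔt
  have hΔtpos : 0 < Δt := by positivity
  set v : ℝ := σ ^ 2 * Δt with hv
  have hvpos : 0 < v := by positivity
  have hvV : v = V / n := by rw [hv, hV, hΔt]; ring
  set cb : ℝ := ε + v / ε with hcb
  have hcbpos : 0 < cb := by positivity
  have hcb_lt : cb < c₀ := by
    have h1 : v / ε = V / (n * ε) := by rw [hvV, div_div]
    rw [hcb, h1, hε]
    have := hncb
    rw [hε] at this
    linarith
  have htt_mono : Monotone tt := hptt_mono n
  have htt_mem : ∀ i, tt i ∈ Set.Icc s t := hptt_mem n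
  have htt_diff : ∀ i, tt (i + 1) - tt i ≤ Δt := fun i => hptt_diff n i
  have htt0 : tt 0 = s := by
    rw [htt, hptt]
    norm_num
  have httn : tt n = t := by
    rw [htt, hptt]
    simp only [min_self]
    field_simp
    ring
  -- increments
  set Δf : ℕ → Ω → ℝ := fun i ω => M (tt (i + 1)) ω - M (tt i) ω with hΔf
  have hΔmeas : ∀ i, StronglyMeasurable[ℱ (tt (i + 1))] (Δf i) := fun i =>
    (hM.stronglyMeasurable _).sub
      ((hM.stronglyMeasurable _).mono (ℱ.mono (htt_mono (Nat.le_succ i))))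
  have hΔmeas' : ∀ i, StronglyMeasurable[m] (Δf i) := fun i => (hΔmeas i).mono (ℱ.le _)
  have hΔint : ∀ i, Integrable (Δf i) μ := fun i => (hM.integrable _).sub (hM.integrable _)
  have hΔsq_int : ∀ i, Integrable (fun ω => Δf i ω ^ 2) μ := by
    intro i
    refine Integrable.mono'
      (((hsq (tt (i + 1))).const_mul 2).add ((hsq (tt i)).const_mul 2))
      ((hΔmeas' i).measurable.pow_const 2).aestronglyMeasurable ?_
    refine Filter.Eventually.of_forall fun ω => ?_
    rw [Real.norm_eq_abs, abs_of_nonneg (sq_nonneg _)]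
    simp only [hΔf, Pi.add_apply]
    nlinarith [sq_nonneg (M (tt (i+1)) ω + M (tt i) ω)]
  have hG_le : ∀ i : ℕ, ℱ (tt i) ≤ m := fun i => ℱ.le _
  have htt_le_T : ∀ i, tt i ≤ T := fun i => le_trans (htt_mem i).2 htT
  have hΔ0 : ∀ i, μ[Δf i | ℱ (tt i)] =ᵐ[μ] 0 := by
    intro i
    have h1 := condExp_sub (μ := μ) (m := ℱ (tt i))
      (hM.integrable (tt (i + 1))) (hM.integrable (tt i))
    have h2 := hM.2 (tt i) (tt (i + 1)) (htt_mono (Nat.le_succ i))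
    have h3 : μ[M (tt i)|ℱ (tt i)] = M (tt i) :=
      condExp_of_stronglyMeasurable (hG_le i) (hM.stronglyMeasurable _) (hM.integrable _)
    have heq : Δf i = M (tt (i + 1)) - M (tt i) := rfl
    rw [heq]
    filter_upwards [h1, h2] with ω hω1 hω2
    rw [hω1]
    simp only [Pi.sub_apply, Pi.zero_apply]
    rw [hω2, h3]
    ring
  have hΔvar : ∀ i, μ[fun ω => Δf i ω ^ 2 | ℱ (tt i)] ≤ᵐ[μ] fun _ => v := by
    intro i
    have h := hvar (tt i) (tt (i + 1)) (htt_mem i).1 (htt_mono (Nat.le_succ i)) (htt_le_T (i + 1))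
    have hle : σ ^ 2 * (tt (i + 1) - tt i) ≤ v := by
      rw [hv]
      exact mul_le_mul_of_nonneg_left (htt_diff i) (sq_nonneg σ)
    filter_upwards [h] with ω hω
    exact le_trans hω hle
  -- truncation
  set D1 : ℕ → Ω → ℝ := fun i ω => if Δf i ω ≤ ε then Δf i ω else 0 with hD1
  have hD1meas : ∀ i, StronglyMeasurable[ℱ (tt (i + 1))] (D1 i) := by
    intro i
    apply Measurable.stronglyMeasurable
    exact Measurable.ite (measurableSet_le (hΔmeas i).measurable measurable_const)
      (hΔmeas i).measurable measurable_const
  have hD1meas' : ∀ i, StronglyMeasurable[m] (D1 i) := fun i => (hD1meas i).mono (ℱ.le _)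
  have hD1abs : ∀ i ω, |D1 i ω| ≤ |Δf i ω| := by
    intro i ω
    simp only [hD1]
    split
    · exact le_rfl
    · simp [abs_nonneg]
  have hD1le : ∀ i ω, D1 i ω ≤ ε := by
    intro i ω
    simp only [hD1]
    split
    · assumption
    · exact hεpos.le
  have hD1int : ∀ i, Integrable (D1 i) μ := by
    intro i
    refine Integrable.mono' (hΔint i).abs (hD1meas' i).aestronglyMeasurable ?_
    exact Filter.Eventually.of_forall fun ω => by
      rw [Real.norm_eq_abs]; exact hD1abs i ω
  have hD1sq : ∀ i ω, D1 i ω ^ 2 ≤ Δf i ω ^ 2 := by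
    intro i ω
    have := hD1abs i ω
    nlinarith [abs_nonneg (D1 i ω), abs_nonneg (Δf i ω), sq_abs (D1 i ω), sq_abs (Δf i ω)]
  have hD1sq_int : ∀ i, Integrable (fun ω => D1 i ω ^ 2) μ := by
    intro i
    refine Integrable.mono' (hΔsq_int i)
      ((hD1meas' i).measurable.pow_const 2).aestronglyMeasurable ?_
    exact Filter.Eventually.of_forall fun ω => by
      rw [Real.norm_eq_abs, abs_of_nonneg (sq_nonneg _)]; exact hD1sq i ω
  set cE : ℕ → Ω → ℝ := fun i => μ[D1 i | ℱ (tt i)] with hcE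
  have hcEmeas : ∀ i, StronglyMeasurable[ℱ (tt i)] (cE i) := fun i => stronglyMeasurable_condExp
  have hcEint : ∀ i, Integrable (cE i) μ := fun i => integrable_condExp
  -- bounds on cE
  have hcEbd : ∀ i, ∀ᵐ ω ∂μ, cE i ω ≤ 0 ∧ -(v / ε) ≤ cE i ω := by
    intro i
    set h2f : Ω → ℝ := fun ω => if Δf i ω ≤ ε then 0 else Δf i ω with hh2f
    have hsplitf : D1 i = Δf i - h2f := by
      funext ω
      simp only [hD1, hh2f, Pi.sub_apply]
      split <;> ring
    have hh2meas : StronglyMeasurable[m] h2f := by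
      apply Measurable.stronglyMeasurable
      exact Measurable.ite (measurableSet_le (hΔmeas' i).measurable measurable_const)
        measurable_const (hΔmeas' i).measurable
    have hh2nonneg : ∀ ω, 0 ≤ h2f ω := by
      intro ω
      simp only [hh2f]
      split
      · exact le_rfl
      · linarith [hεpos, not_le.1 (by assumption : ¬ Δf i ω ≤ ε)]
    have hh2le : ∀ ω, h2f ω ≤ Δf i ω ^ 2 / ε := by
      intro ω
      simp only [hh2f]
      split
      · positivity
      · rename_i hgt
        push_neg at hgt
        rw [le_div_iff₀ hεpos]
        nlinarith
    have hh2int : Integrable h2f μ := by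
      refine Integrable.mono' (hΔint i).abs hh2meas.aestronglyMeasurable ?_
      refine Filter.Eventually.of_forall fun ω => ?_
      rw [Real.norm_eq_abs]
      simp only [hh2f]
      split
      · simp [abs_nonneg]
      · exact le_rfl
    have hcond : cE i =ᵐ[μ] μ[Δf i|ℱ (tt i)] - μ[h2f|ℱ (tt i)] := by
      rw [hcE]
      simp only
      rw [hsplitf]
      exact condExp_sub (hΔint i) hh2int _
    have hnn := condExp_nonneg (μ := μ) (m := ℱ (tt i))
      (Filter.Eventually.of_forall hh2nonneg)
    have hub : μ[h2f|ℱ (tt i)] ≤ᵐ[μ] fun _ => v / ε := by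
      have hmono2 := condExp_mono (μ := μ) (m := ℱ (tt i)) hh2int
        ((hΔsq_int i).div_const ε)
        (Filter.Eventually.of_forall hh2le)
      have hsmul : μ[fun ω => Δf i ω ^ 2 / ε|ℱ (tt i)]
          =ᵐ[μ] fun ω => (μ[fun ω => Δf i ω ^ 2|ℱ (tt i)]) ω / ε := by
        have hs := condExp_smul (μ := μ) (m := ℱ (tt i)) (ε⁻¹) (fun ω => Δf i ω ^ 2)
        have heq2 : (fun ω => Δf i ω ^ 2 / ε) = ε⁻¹ • fun ω => Δf i ω ^ 2 := by
          funext ω; simp [smul_eq_mul]; ring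
        rw [heq2]
        filter_upwards [hs] with ω hω
        rw [hω]
        simp [smul_eq_mul]
        ring
      filter_upwards [hmono2, hsmul, hΔvar i] with ω h1 h2 h3
      rw [h2] at h1
      calc (μ[h2f|ℱ (tt i)]) ω ≤ (μ[fun ω => Δf i ω ^ 2|ℱ (tt i)]) ω / ε := h1
        _ ≤ v / ε := by gcongr
    filter_upwards [hcond, hnn, hub, hΔ0 i] with ω h1 h2 h3 h4
    simp only [Pi.zero_apply] at h2 h4
    rw [h1]
    simp only [Pi.sub_apply]
    rw [h4]
    constructor
    · linarith
    · linarith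
  -- centered truncated increments
  set D2 : ℕ → Ω → ℝ := fun i ω => D1 i ω - cE i ω with hD2
  have hD2meas : ∀ i, StronglyMeasurable[ℱ (tt (i + 1))] (D2 i) := fun i =>
    (hD1meas i).sub ((hcEmeas i).mono (ℱ.mono (htt_mono (Nat.le_succ i))))
  have hD2int : ∀ i, Integrable (D2 i) μ := fun i => (hD1int i).sub (hcEint i)
  have hcEae_norm : ∀ i, ∀ᵐ ω ∂μ, ‖cE i ω‖ ≤ v / ε := by
    intro i
    filter_upwards [hcEbd i] with ω hω
    rw [Real.norm_eq_abs, abs_le]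
    have hvε : 0 ≤ v / ε := by positivity
    exact ⟨hω.2, by linarith [hω.1]⟩
  have hcEsq_int : ∀ i, Integrable (fun ω => cE i ω ^ 2) μ := by
    intro i
    refine Integrable.mono' (integrable_const ((v / ε) ^ 2))
      ((((hcEmeas i).mono (hG_le i)).measurable.pow_const 2).aestronglyMeasurable) ?_
    filter_upwards [hcEae_norm i] with ω hω
    rw [Real.norm_eq_abs, abs_of_nonneg (sq_nonneg _)]
    rw [Real.norm_eq_abs] at hω
    nlinarith [abs_nonneg (cE i ω), sq_abs (cE i ω)]
  have hD2sq_int : ∀ i, Integrable (fun ω => D2 i ω ^ 2) μ := by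
    intro i
    refine Integrable.mono' (((hD1sq_int i).const_mul 2).add ((hcEsq_int i).const_mul 2))
      ((((hD2meas i).mono (ℱ.le _)).measurable.pow_const 2).aestronglyMeasurable) ?_
    refine Filter.Eventually.of_forall fun ω => ?_
    rw [Real.norm_eq_abs, abs_of_nonneg (sq_nonneg _)]
    simp only [hD2, Pi.add_apply]
    nlinarith [sq_nonneg (D1 i ω + cE i ω)]
  have hD2bd : ∀ i, ∀ᵐ ω ∂μ, D2 i ω ≤ cb := by
    intro i
    filter_upwards [hcEbd i] with ω hω
    simp only [hD2]
    have := hD1le i ω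
    rw [hcb]
    linarith [hω.2]
  have hD20 : ∀ i, μ[D2 i | ℱ (tt i)] =ᵐ[μ] 0 := by
    intro i
    have h1 : D2 i = D1 i - cE i := rfl
    have h2 := condExp_sub (μ := μ) (m := ℱ (tt i)) (hD1int i) (hcEint i)
    have h3 : μ[cE i|ℱ (tt i)] = cE i :=
      condExp_of_stronglyMeasurable (hG_le i) (hcEmeas i) (hcEint i)
    rw [h1]
    filter_upwards [h2] with ω hω
    rw [hω]
    simp only [Pi.sub_apply, Pi.zero_apply]
    rw [h3]
    exact sub_self _
  have hD2var : ∀ i, μ[fun ω => D2 i ω ^ 2 | ℱ (tt i)] ≤ᵐ[μ] fun _ => v := by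
    intro i
    have hF2int : Integrable (fun ω => cE i ω * D1 i ω) μ :=
      Integrable.bdd_mul (hD1int i) ((hcEmeas i).mono (hG_le i)).aestronglyMeasurable
        (hcEae_norm i)
    have hF3int : Integrable (fun ω => cE i ω * cE i ω) μ :=
      Integrable.bdd_mul (hcEint i) ((hcEmeas i).mono (hG_le i)).aestronglyMeasurable
        (hcEae_norm i)
    have heq : (fun ω => D2 i ω ^ 2) =
        (fun ω => D1 i ω ^ 2 - (2:ℝ) * (cE i ω * D1 i ω)) + fun ω => cE i ω * cE i ω := by
      funext ω
      simp only [hD2, Pi.add_apply]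
      ring
    have hintA : Integrable (fun ω => D1 i ω ^ 2 - (2:ℝ) * (cE i ω * D1 i ω)) μ :=
      (hD1sq_int i).sub (hF2int.const_mul 2)
    have e1 := condExp_add (μ := μ) (m := ℱ (tt i)) hintA hF3int
    have e2 : μ[(fun ω => D1 i ω ^ 2 - (2:ℝ) * (cE i ω * D1 i ω))|ℱ (tt i)] =ᵐ[μ]
        μ[(fun ω => D1 i ω ^ 2)|ℱ (tt i)] - μ[(fun ω => (2:ℝ) * (cE i ω * D1 i ω))|ℱ (tt i)] :=
      condExp_sub (hD1sq_int i) (hF2int.const_mul 2) _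
    have e2b : μ[(fun ω => (2:ℝ) * (cE i ω * D1 i ω))|ℱ (tt i)] =ᵐ[μ]
        (2:ℝ) • μ[(fun ω => cE i ω * D1 i ω)|ℱ (tt i)] :=
      condExp_smul (μ := μ) (m := ℱ (tt i)) (2:ℝ) (fun ω => cE i ω * D1 i ω)
    have e3 : μ[(fun ω => cE i ω * D1 i ω)|ℱ (tt i)] =ᵐ[μ] cE i * μ[D1 i|ℱ (tt i)] :=
      condExp_stronglyMeasurable_mul_of_bound (hG_le i) (hcEmeas i) (hD1int i) (v / ε)
        (hcEae_norm i)
    have e4 : μ[(fun ω => cE i ω * cE i ω)|ℱ (tt i)] = fun ω => cE i ω * cE i ω :=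
      condExp_of_stronglyMeasurable (hG_le i) ((hcEmeas i).mul (hcEmeas i)) hF3int
    have e5 := condExp_mono (μ := μ) (m := ℱ (tt i)) (hD1sq_int i) (hΔsq_int i)
      (Filter.Eventually.of_forall (hD1sq i))
    rw [heq]
    filter_upwards [e1, e2, e2b, e3, e5, hΔvar i] with ω h1 h2 h2b h3 h5 h6
    have hcid : (μ[D1 i|ℱ (tt i)]) ω = cE i ω := rfl
    have h4 := congrFun e4 ω
    simp only [Pi.add_apply, Pi.sub_apply, Pi.smul_apply, Pi.mul_apply, smul_eq_mul] at h1 h2 h2b h3 h4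
    rw [h1, h2, h2b, h3, h4, hcid]
    nlinarith [mul_self_nonneg (cE i ω)]
  -- mgf bound and Chernoff
  have hMGF := mgf_bound (fun i => ℱ (tt i)) hG_le (fun i j hij => ℱ.mono (htt_mono hij))
    D2 l cb v hlpos.le hcbpos.le hvpos.le hD2meas hD2int hD2sq_int hD2bd hD20 hD2var n
  set Sn : Ω → ℝ := fun ω => ∑ i ∈ Finset.range n, D2 i ω with hSn
  have hSnmeas : StronglyMeasurable[m] Sn := by
    apply Finset.stronglyMeasurable_fun_sum
    exact fun i _ => (hD2meas i).mono (ℱ.le _)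
  have hSnbd : ∀ᵐ ω ∂μ, Sn ω ≤ n * cb := by
    have h := (ae_ball_iff (Finset.range n).countable_toSet).2
      fun i (_ : i ∈ ↑(Finset.range n)) => hD2bd i
    filter_upwards [h] with ω hω
    calc Sn ω ≤ ∑ _i ∈ Finset.range n, cb := Finset.sum_le_sum fun i hi => hω i hi
      _ = n * cb := by simp [mul_comm]
  have hexpSn_int : Integrable (fun ω => Real.exp (l * Sn ω)) μ := by
    refine Integrable.mono' (integrable_const (Real.exp (l * (n * cb))))
      (Real.continuous_exp.comp_stronglyMeasurable (hSnmeas.const_mul l)).aestronglyMeasurable ?_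
    filter_upwards [hSnbd] with ω hω
    rw [Real.norm_eq_abs, abs_of_pos (Real.exp_pos _)]
    exact Real.exp_le_exp.2 (mul_le_mul_of_nonneg_left hω hlpos.le)
  set B : ℝ := 1 + l ^ 2 * Real.exp (l * cb) * v / 2 with hB
  have hchern : (μ {ω | x ≤ Sn ω}).toReal ≤ Real.exp (-(l * x)) * B ^ n := by
    have hmar := mul_meas_ge_le_integral_of_nonneg
      (Filter.Eventually.of_forall fun ω => (Real.exp_pos (l * Sn ω)).le) hexpSn_int
      (Real.exp (l * x))
    have hseteq : {ω | Real.exp (l * x) ≤ Real.exp (l * Sn ω)} = {ω | x ≤ Sn ω} := by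
      ext ω
      simp only [Set.mem_setOf_eq, Real.exp_le_exp]
      exact ⟨fun h => le_of_mul_le_mul_left h hlpos, fun h => mul_le_mul_of_nonneg_left h hlpos.le⟩
    rw [hseteq] at hmar
    have h2 : Real.exp (l * x) * (μ {ω | x ≤ Sn ω}).toReal ≤ B ^ n := le_trans hmar hMGF
    have hexpos : 0 < Real.exp (l * x) := Real.exp_pos _
    calc (μ {ω | x ≤ Sn ω}).toReal
        = (Real.exp (l * x) * (μ {ω | x ≤ Sn ω}).toReal) / Real.exp (l * x) := by field_simp
      _ ≤ B ^ n / Real.exp (l * x) := by gcongr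
      _ = Real.exp (-(l * x)) * B ^ n := by rw [Real.exp_neg]; ring
  have hBn : B ^ n ≤ Real.exp (l ^ 2 * Real.exp (l * cb) * V / 2) := by
    have h1 : B ≤ Real.exp (l ^ 2 * Real.exp (l * cb) * v / 2) := by
      rw [hB]
      linarith [Real.add_one_le_exp (l ^ 2 * Real.exp (l * cb) * v / 2)]
    have hB0 : 0 ≤ B := by rw [hB]; positivity
    calc B ^ n ≤ (Real.exp (l ^ 2 * Real.exp (l * cb) * v / 2)) ^ n := pow_le_pow_left₀ hB0 h1 n
      _ = Real.exp (n * (l ^ 2 * Real.exp (l * cb) * v / 2)) := by rw [← Real.exp_nat_mul]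
      _ = Real.exp (l ^ 2 * Real.exp (l * cb) * V / 2) := by
          congr 1
          rw [hvV]
          field_simp
  -- inclusion into Chernoff event
  have hincl : μ ({ω | x ≤ M t ω - M s ω} \ Bad n) ≤ μ {ω | x ≤ Sn ω} := by
    apply measure_mono_ae
    have hall := (ae_ball_iff (Finset.range n).countable_toSet).2
      fun i (_ : i ∈ ↑(Finset.range n)) => hcEbd i
    filter_upwards [hall] with ω hω hmem
    obtain ⟨hx_le, hnotbad⟩ := hmem
    simp only [Set.mem_setOf_eq] at hx_le ⊢
    rw [hBad] at hnotbad
    simp only [Set.mem_setOf_eq] at hnotbad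
    push_neg at hnotbad
    simp only [← htt] at hnotbad
    have hD1eq : ∀ i ∈ Finset.range n, D1 i ω = Δf i ω := by
      intro i hi
      simp only [hD1]
      rw [if_pos]
      exact hnotbad i (Finset.mem_range.1 hi)
    have hsum : Sn ω = ∑ i ∈ Finset.range n, (Δf i ω - cE i ω) := by
      apply Finset.sum_congr rfl
      intro i hi
      simp only [hD2]
      rw [hD1eq i hi]
    have htel : ∑ i ∈ Finset.range n, Δf i ω = M t ω - M s ω := by
      simp only [hΔf]
      rw [Finset.sum_range_sub (fun i => M (tt i) ω), httn, htt0]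
    have hce : ∑ i ∈ Finset.range n, cE i ω ≤ 0 :=
      Finset.sum_nonpos fun i hi => (hω i hi).1
    show x ≤ Sn ω
    rw [hsum, Finset.sum_sub_distrib, htel]
    linarith
  -- final assembly
  have hBadsmall : (μ (Bad n)).toReal ≤ δ / 2 := by
    have h := (ENNReal.lt_ofReal_iff_toReal_lt (measure_ne_top μ _)).1 hnBad
    linarith
  have hsplit2 : (μ {ω | x ≤ M t ω - M s ω}).toReal
      ≤ (μ {ω | x ≤ Sn ω}).toReal + (μ (Bad n)).toReal := by
    have hss : {ω | x ≤ M t ω - M s ω} ⊆ ({ω | x ≤ M t ω - M s ω} \ Bad n) ∪ Bad n := by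
      intro ω hω
      by_cases h : ω ∈ Bad n
      · exact Or.inr h
      · exact Or.inl ⟨hω, h⟩
    have h1 : μ {ω | x ≤ M t ω - M s ω} ≤ μ {ω | x ≤ Sn ω} + μ (Bad n) := by
      calc μ {ω | x ≤ M t ω - M s ω}
          ≤ μ (({ω | x ≤ M t ω - M s ω} \ Bad n) ∪ Bad n) := measure_mono hss
        _ ≤ μ ({ω | x ≤ M t ω - M s ω} \ Bad n) + μ (Bad n) := measure_union_le _ _
        _ ≤ μ {ω | x ≤ Sn ω} + μ (Bad n) := by gcongr
    calc (μ {ω | x ≤ M t ω - M s ω}).toReal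
        ≤ (μ {ω | x ≤ Sn ω} + μ (Bad n)).toReal :=
          ENNReal.toReal_mono
            (ENNReal.add_ne_top.2 ⟨measure_ne_top μ _, measure_ne_top μ _⟩) h1
      _ = (μ {ω | x ≤ Sn ω}).toReal + (μ (Bad n)).toReal :=
          ENNReal.toReal_add (measure_ne_top μ _) (measure_ne_top μ _)
  have hlast : (μ {ω | x ≤ Sn ω}).toReal ≤ g cb := by
    calc (μ {ω | x ≤ Sn ω}).toReal ≤ Real.exp (-(l * x)) * B ^ n := hchern
      _ ≤ Real.exp (-(l * x)) * Real.exp (l ^ 2 * Real.exp (l * cb) * V / 2) :=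
          mul_le_mul_of_nonneg_left hBn (Real.exp_pos _).le
      _ = g cb := by rw [hg, ← Real.exp_add]
  have hgc0 := hc₀ cb hcbpos.le hcb_lt
  linarith
end
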